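/- Let G : ℕ → ℕ be defined greedily by G(x) = mex({G(x') : x' < x} ∪ (Y_x ∩ ℕ)), where (Y_x) is a sequence of finite subsets of ℤ that is additively periodic with period p (Y_{x+p} = Y_x + p for all x). Then G is surjective, hence a permutation of ℕ. -/

import Mathlib

/-- the greedy (mex) sequence over an additively periodic
sequence of finite sets is surjective, hence a permutation of ℕ. -/
theorem nim_sequence_bijective
    (Y : ℕ → Finset ℤ) (p : ℕ) (hp : 1 ≤ p)
    (hper : ∀ x : ℕ, Y (x + p) = (Y x).image (· + (p : ℤ)))
    (G : ℕ → ℕ)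
    (hG : ∀ x : ℕ, G x = sInf {n : ℕ | (∀ x' < x, G x' ≠ n) ∧ (n : ℤ) ∉ Y x}) :
    Function.Surjective G ∧ Function.Bijective G := by
  have hmem : ∀ x : ℕ, (∀ x' < x, G x' ≠ G x) ∧ ((G x : ℤ) ∉ Y x) := by
    intro x
    have hne : {n : ℕ | (∀ x' < x, G x' ≠ n) ∧ (n : ℤ) ∉ Y x}.Nonempty := by
      set B := ((Finset.range x).image G).sup id with hB
      set C := ((Y x).image Int.toNat).sup id with hC
      refine ⟨B + C + 1, ?_, ?_⟩
      · intro x' hx' h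
        have : G x' ≤ B :=
          Finset.le_sup (f := id) (Finset.mem_image_of_mem G (Finset.mem_range.mpr hx'))
        omega
      · intro hmm
        have : Int.toNat ((B + C + 1 : ℕ) : ℤ) ≤ C :=
          Finset.le_sup (f := id) (Finset.mem_image_of_mem Int.toNat hmm)
        simp at this
        omega
    have := Nat.sInf_mem hne
    rw [← hG x] at this
    exact this
  have hinj : Function.Injective G := by
    intro a b hab
    by_contra hne
    rcases Nat.lt_or_ge a b with h | h
    · exact (hmem b).1 a h hab
    · exact (hmem a).1 b (lt_of_le_of_ne h (Ne.symm hne)) hab.symm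
  have hsurj : Function.Surjective G := by
    intro y
    by_contra hy
    push_neg at hy
    have hshift : ∀ k j (z : ℤ), z ∈ Y (j + k * p) ↔ z - k * p ∈ Y j := by
      intro k
      induction k with
      | zero => simp
      | succ k ih =>
        intro j z
        have hrw : j + (k + 1) * p = (j + k * p) + p := by ring
        rw [hrw, hper]
        simp only [Finset.mem_image]
        constructor
        · rintro ⟨w, hw, rfl⟩
          have h1 := (ih j w).mp hw
          have e : (fun x => x + (p : ℤ)) w - ((k + 1 : ℕ) : ℤ) * p = w - k * p := by
            push_cast; ring
          rw [e]; exact h1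
        · intro h
          refine ⟨z - p, (ih j _).mpr ?_, by ring⟩
          have e : z - (p : ℤ) - k * p = z - ((k + 1 : ℕ) : ℤ) * p := by
            push_cast; ring
          rw [e]; exact h
    set T := (Finset.range p).biUnion Y with hT
    obtain ⟨m, hm⟩ : ∃ m : ℤ, ∀ z ∈ T, m ≤ z := by
      rcases T.eq_empty_or_nonempty with h | h
      · exact ⟨0, by simp [h]⟩
      · exact ⟨T.min' h, fun z hz => T.min'_le z hz⟩
    set K := (y - m).toNat + 1 with hK
    have hbig : ∀ x, K * p ≤ x → (y : ℤ) ∉ Y x := by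
      intro x hx hyx
      have hj : x % p < p := Nat.mod_lt x (by omega)
      have hxe : x = x % p + (x / p) * p := (Nat.mod_add_div' x p).symm
      rw [hxe] at hyx
      have h2 := (hshift (x / p) (x % p) y).mp hyx
      have hmle : m ≤ (y : ℤ) - (x / p : ℕ) * p :=
        hm _ (Finset.mem_biUnion.mpr ⟨x % p, Finset.mem_range.mpr hj, h2⟩)
      have hk : K ≤ x / p := (Nat.le_div_iff_mul_le (by omega)).mpr hx
      have h3 : (K : ℤ) ≤ (x / p : ℕ) := by exact_mod_cast hk
      have hp' : (1 : ℤ) ≤ (p : ℕ) := by exact_mod_cast hp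
      have h4 : (y : ℤ) - m ≤ ((y - m).toNat : ℤ) := Int.self_le_toNat _
      have h5 : ((x / p : ℕ) : ℤ) * p ≥ (K : ℤ) * 1 := by
        apply mul_le_mul h3 hp' (by norm_num) (by positivity)
      have h6 : ((K : ℕ) : ℤ) = ((y - m).toNat : ℤ) + 1 := by
        rw [hK]; push_cast; ring
      omega
    have hlt : ∀ x, K * p ≤ x → G x < y := by
      intro x hx
      have hy' : y ∈ {n : ℕ | (∀ x' < x, G x' ≠ n) ∧ (n : ℤ) ∉ Y x} :=
        ⟨fun x' _ => hy x', hbig x hx⟩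
      have hle := Nat.sInf_le hy'
      rw [← hG x] at hle
      exact lt_of_le_of_ne hle (hy x)
    have hcard : (Finset.Icc (K * p) (K * p + y)).card ≤ (Finset.range y).card := by
      apply Finset.card_le_card_of_injOn G
      · intro x hx
        simp only [Finset.coe_Icc, Finset.mem_coe, Set.mem_Icc, Finset.mem_Icc] at hx
        exact Finset.mem_range.mpr (hlt x hx.1)
      · exact fun a _ b _ h => hinj h
    simp [Nat.card_Icc] at hcard
    omega
  exact ⟨hsurj, hinj, hsurj⟩
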